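/- Let I be a small monoidal category, C a tensor category over an algebraically closed field k, and F, G : I → C strong monoidal functors. Then the set Nat_⊗(F, G) of monoidal natural transformations F → G is a linearly independent subset of the k-vector space Nat(F, G) of all natural transformations F → G. -/

import Mathlib

open CategoryTheory CategoryTheory.MonoidalCategory CategoryTheory.Limits

attribute [local instance] CategoryTheory.Abelian.hasFiniteBiproducts
set_option linter.unusedSectionVars false

section Aux

open FiniteDimensional Module

variable (k : Type*) [Field k] [IsAlgClosed k]
variable {C : Type*} [Category C] [Abelian C] [Linear k C]
    [MonoidalCategory C] [MonoidalPreadditive C] [MonoidalLinear k C]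
    [RigidCategory C] [Simple (𝟙_ C)]
    [∀ X : C, IsNoetherianObject X] [∀ X : C, IsArtinianObject X]
    [∀ X Y : C, FiniteDimensional k (X ⟶ Y)]

/-- Every endomorphism of the unit object is a scalar multiple of the identity. -/
lemma aux_end_unit (e : 𝟙_ C ⟶ 𝟙_ C) : ∃ c : k, e = c • 𝟙 (𝟙_ C) := by
  have h1 : Module.finrank k (𝟙_ C ⟶ 𝟙_ C) = 1 :=
    finrank_endomorphism_simple_eq_one k (𝟙_ C)
  have hne : (𝟙 (𝟙_ C)) ≠ (0 : 𝟙_ C ⟶ 𝟙_ C) := id_nonzero _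
  obtain ⟨c, hc⟩ := ((finrank_eq_one_iff_of_nonzero' (𝟙 (𝟙_ C)) hne).mp h1) e
  exact ⟨c, hc.symm⟩

lemma aux_smul_tensor {A B X Y : C} (r : k) (f : A ⟶ B) (g : X ⟶ Y) :
    (r • f) ⊗ₘ g = r • (f ⊗ₘ g) := by
  simp [MonoidalCategory.tensorHom_def, MonoidalLinear.smul_whiskerRight, Linear.smul_comp]

lemma aux_mono_whiskerLeft (Q : C) {X Y : C} (f : X ⟶ Y) [Mono f] : Mono (Q ◁ f) := by
  constructor
  intro T a b h
  have key : (tensorLeftHomEquiv T Q (Qᘁ) X).symm a ≫ f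
      = (tensorLeftHomEquiv T Q (Qᘁ) X).symm b ≫ f := by
    apply (tensorLeftHomEquiv T Q (Qᘁ) Y).injective
    rw [tensorLeftHomEquiv_naturality, tensorLeftHomEquiv_naturality,
      Equiv.apply_symm_apply, Equiv.apply_symm_apply, h]
  have key2 := (cancel_mono f).mp key
  have := congrArg (tensorLeftHomEquiv T Q (Qᘁ) X) key2
  simpa using this

lemma aux_mono_whiskerRight {X Y : C} (f : X ⟶ Y) [Mono f] (D : C) : Mono (f ▷ D) := by
  constructor
  intro T a b h
  have key : (tensorRightHomEquiv T (ᘁD) D X).symm a ≫ f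
      = (tensorRightHomEquiv T (ᘁD) D X).symm b ≫ f := by
    apply (tensorRightHomEquiv T (ᘁD) D Y).injective
    rw [tensorRightHomEquiv_naturality, tensorRightHomEquiv_naturality,
      Equiv.apply_symm_apply, Equiv.apply_symm_apply, h]
  have key2 := (cancel_mono f).mp key
  have := congrArg (tensorRightHomEquiv T (ᘁD) D X) key2
  simpa using this

/-- A linearly independent family `𝟙 ⟶ U` gives a monomorphism `⨁ 𝟙 ⟶ U`. -/
lemma aux_mono_desc {n : ℕ} {U : C} (u : Fin n → (𝟙_ C ⟶ U))
    (hu : LinearIndependent k u) : Mono (biproduct.desc u) := by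
  apply Abelian.mono_of_kernel_ι_eq_zero
  by_contra hne
  have hK : ¬ IsZero (kernel (biproduct.desc u)) := fun h => hne (h.eq_zero_of_src _)
  set s : simpleSubobject hK ⟶ ⨁ (fun _ : Fin n => 𝟙_ C) :=
    simpleSubobjectArrow hK ≫ kernel.ι (biproduct.desc u) with hs_def
  have hs0 : s ≫ biproduct.desc u = 0 := by
    rw [hs_def, Category.assoc, kernel.condition, comp_zero]
  have hsmono : Mono s := mono_comp _ _
  have hsne : s ≠ 0 := by
    intro h0
    apply id_nonzero (simpleSubobject hK)
    rw [← cancel_mono s, h0]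
    simp
  have hj : ∃ j, s ≫ biproduct.π (fun _ : Fin n => 𝟙_ C) j ≠ 0 := by
    by_contra hall
    push_neg at hall
    exact hsne (biproduct.hom_ext _ _ (by simpa using hall))
  obtain ⟨j0, hj0⟩ := hj
  haveI : IsIso (s ≫ biproduct.π (fun _ : Fin n => 𝟙_ C) j0) := isIso_of_hom_simple hj0
  set w : 𝟙_ C ⟶ ⨁ (fun _ : Fin n => 𝟙_ C) :=
    inv (s ≫ biproduct.π (fun _ : Fin n => 𝟙_ C) j0) ≫ s with hw_def
  have hw : w ≫ biproduct.desc u = 0 := by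
    rw [hw_def, Category.assoc, hs0, comp_zero]
  choose c hc using fun j => aux_end_unit k (w ≫ biproduct.π (fun _ : Fin n => 𝟙_ C) j)
  have e1 : w ≫ biproduct.desc u
      = ∑ j : Fin n, (w ≫ biproduct.π (fun _ : Fin n => 𝟙_ C) j) ≫ u j := by
    conv_lhs => rw [← Category.id_comp (biproduct.desc u), ← biproduct.total]
    rw [Preadditive.sum_comp, Preadditive.comp_sum]
    refine Finset.sum_congr rfl fun j _ => ?_
    simp [Category.assoc]
  have hsum : ∑ j : Fin n, c j • u j = 0 := by
    calc ∑ j : Fin n, c j • u j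
        = ∑ j : Fin n, (w ≫ biproduct.π (fun _ : Fin n => 𝟙_ C) j) ≫ u j := by
          refine Finset.sum_congr rfl fun j _ => ?_
          rw [hc j, Linear.smul_comp, Category.id_comp]
      _ = w ≫ biproduct.desc u := e1.symm
      _ = 0 := hw
  have hc0 := Fintype.linearIndependent_iff.mp hu c hsum j0
  apply id_nonzero (𝟙_ C)
  have hwj0 : w ≫ biproduct.π (fun _ : Fin n => 𝟙_ C) j0 = 𝟙 (𝟙_ C) := by
    rw [hw_def, Category.assoc, IsIso.inv_hom_id]
  rw [← hwj0, hc j0, hc0, zero_smul]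

/-- If `∑ u j ⊗ₘ g j = 0` with the `u j : 𝟙 ⟶ U` linearly independent, then all `g j = 0`. -/
lemma aux_indep_pair_left {n : ℕ} {U B D : C} (u : Fin n → (𝟙_ C ⟶ U))
    (hu : LinearIndependent k u) (g : Fin n → (B ⟶ D))
    (hsum : ∑ j : Fin n, u j ⊗ₘ g j = 0) : ∀ j, g j = 0 := by
  haveI : Mono (biproduct.desc u) := aux_mono_desc k u hu
  haveI : Mono ((biproduct.desc u) ▷ D) := aux_mono_whiskerRight (biproduct.desc u) D
  have key : (∑ j : Fin n, (𝟙_ C ◁ g j) ≫ (biproduct.ι (fun _ : Fin n => 𝟙_ C) j ▷ D))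
      ≫ ((biproduct.desc u) ▷ D) = 0 := by
    rw [Preadditive.sum_comp, ← hsum]
    refine Finset.sum_congr rfl fun j _ => ?_
    rw [Category.assoc, ← comp_whiskerRight, biproduct.ι_desc, tensorHom_def']
  have W0 : (∑ j : Fin n, (𝟙_ C ◁ g j) ≫ (biproduct.ι (fun _ : Fin n => 𝟙_ C) j ▷ D)) = 0 :=
    zero_of_comp_mono _ key
  intro j0
  have h2 := congrArg (fun t => t ≫ (biproduct.π (fun _ : Fin n => 𝟙_ C) j0 ▷ D)) W0
  simp only [Preadditive.sum_comp, Category.assoc, ← comp_whiskerRight, zero_comp] at h2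
  rw [Finset.sum_eq_single j0] at h2
  · rw [biproduct.ι_π_self, MonoidalCategory.id_whiskerRight, Category.comp_id] at h2
    have h4 : (λ_ B).inv ≫ (𝟙_ C ◁ g j0) ≫ (λ_ D).hom = g j0 := by
      rw [MonoidalCategory.leftUnitor_naturality]
      simp
    rw [← h4, h2]
    simp
  · intro j _ hjne
    rw [biproduct.ι_π_ne _ hjne]
    simp
  · intro h; exact absurd (Finset.mem_univ j0) h

/-- If `∑ f j ⊗ₘ g j = 0` with the `f j : A ⟶ A'` linearly independent, then all `g j = 0`. -/
lemma aux_indep_pair_gen {n : ℕ} {A A' B D : C} (f : Fin n → (A ⟶ A'))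
    (hf : LinearIndependent k f) (g : Fin n → (B ⟶ D))
    (hsum : ∑ j : Fin n, f j ⊗ₘ g j = 0) : ∀ j, g j = 0 := by
  -- move the first slot to maps out of the unit, using the left dual of `A`
  set u : Fin n → (𝟙_ C ⟶ (ᘁA) ⊗ A') := fun j => η_ (ᘁA) A ≫ ((ᘁA) ◁ f j) with hu_def
  have hretract : ∀ h : A ⟶ A',
      (ρ_ A).inv ≫ (A ◁ (η_ (ᘁA) A ≫ ((ᘁA) ◁ h))) ≫ (α_ A (ᘁA) A').inv
        ≫ (ε_ (ᘁA) A ▷ A') ≫ (λ_ A').hom = h := by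
    intro h
    rw [MonoidalCategory.whiskerLeft_comp]
    have hnat : A ◁ ((ᘁA) ◁ h) ≫ (α_ A (ᘁA) A').inv = (α_ A (ᘁA) A).inv ≫ ((A ⊗ ᘁA) ◁ h) := by
      simp
    have hexch : ((A ⊗ ᘁA) ◁ h) ≫ (ε_ (ᘁA) A ▷ A') = (ε_ (ᘁA) A ▷ A) ≫ (𝟙_ C ◁ h) :=
      whisker_exchange _ _
    slice_lhs 3 4 => rw [hnat]
    slice_lhs 4 5 => rw [hexch]
    slice_lhs 2 4 => rw [ExactPairing.coevaluation_evaluation]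
    simp [MonoidalCategory.leftUnitor_naturality]
  have hL : LinearIndependent k u := by
    let L : (A ⟶ A') →ₗ[k] (𝟙_ C ⟶ (ᘁA) ⊗ A') :=
      { toFun := fun h => η_ (ᘁA) A ≫ ((ᘁA) ◁ h)
        map_add' := by intro x y; simp [MonoidalPreadditive.whiskerLeft_add]
        map_smul' := by intro r x; simp [MonoidalLinear.whiskerLeft_smul] }
    have hinj : LinearMap.ker L = ⊥ := by
      rw [LinearMap.ker_eq_bot]
      intro x y hxy
      have hxy' : η_ (ᘁA) A ≫ ((ᘁA) ◁ x) = η_ (ᘁA) A ≫ ((ᘁA) ◁ y) := hxy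
      have h2 := congrArg (fun t => (ρ_ A).inv ≫ (A ◁ t) ≫ (α_ A (ᘁA) A').inv
        ≫ (ε_ (ᘁA) A ▷ A') ≫ (λ_ A').hom) hxy'
      simpa only [hretract x, hretract y] using h2
    exact hf.map' L hinj
  -- transport the vanishing sum
  have husum : ∑ j : Fin n, u j ⊗ₘ g j = 0 := by
    have hform : ∀ j : Fin n, u j ⊗ₘ g j
        = (η_ (ᘁA) A ⊗ₘ 𝟙 B) ≫ (α_ (ᘁA) A B).hom ≫ ((ᘁA) ◁ (f j ⊗ₘ g j))
          ≫ (α_ (ᘁA) A' D).inv := by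
      intro j
      have h1 : u j ⊗ₘ g j = (η_ (ᘁA) A ⊗ₘ 𝟙 B) ≫ (((ᘁA) ◁ f j) ⊗ₘ g j) := by
        rw [hu_def]
        rw [MonoidalCategory.tensorHom_comp_tensorHom]
        simp
      have h2 := associator_naturality (𝟙 (ᘁA)) (f j) (g j)
      rw [MonoidalCategory.id_tensorHom, MonoidalCategory.id_tensorHom] at h2
      rw [h1]
      congr 1
      rw [← Category.assoc, ← h2]
      simp
    calc ∑ j : Fin n, u j ⊗ₘ g j
        = (η_ (ᘁA) A ⊗ₘ 𝟙 B) ≫ (α_ (ᘁA) A B).hom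
          ≫ ((ᘁA) ◁ (∑ j : Fin n, f j ⊗ₘ g j)) ≫ (α_ (ᘁA) A' D).inv := by
          rw [whiskerLeft_sum]
          simp only [Preadditive.sum_comp, Preadditive.comp_sum]
          exact Finset.sum_congr rfl fun j _ => hform j
      _ = 0 := by rw [hsum]; simp
  exact aux_indep_pair_left k u hL g husum

/-- From a vanishing sum of tensor products one can apply any linear functional
in the first slot. -/
lemma aux_extract {ι : Type*} {A A' B D : C} (s : Finset ι) (f : ι → (A ⟶ A'))
    (g : ι → (B ⟶ D)) (hsum : ∑ i ∈ s, f i ⊗ₘ g i = 0)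
    (φ : (A ⟶ A') →ₗ[k] k) : ∑ i ∈ s, φ (f i) • g i = 0 := by
  classical
  set V : Submodule k (A ⟶ A') := Submodule.span k ↑(s.image f) with hV_def
  have hmem : ∀ i ∈ s, f i ∈ V := fun i hi =>
    Submodule.subset_span (Finset.mem_coe.mpr (Finset.mem_image_of_mem f hi))
  set n := Module.finrank k V with hn_def
  set b : Basis (Fin n) k V := Module.finBasis k V with hb_def
  set Ffam : Fin n → (A ⟶ A') := fun j => ((b j : V) : A ⟶ A') with hF_def
  have hFind : LinearIndependent k Ffam :=
    b.linearIndependent.map' V.subtype (Submodule.ker_subtype V)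
  set c : ι → Fin n → k := fun i j => if h : i ∈ s then b.repr ⟨f i, hmem i h⟩ j else 0
    with hc_def
  have hrepr : ∀ i ∈ s, f i = ∑ j : Fin n, c i j • Ffam j := by
    intro i hi
    have : ∑ j : Fin n, c i j • Ffam j
        = V.subtype (∑ j : Fin n, b.repr ⟨f i, hmem i hi⟩ j • b j) := by
      rw [map_sum]
      refine Finset.sum_congr rfl fun j _ => ?_
      rw [hc_def]
      simp only [dif_pos hi, map_smul]
      rfl
    rw [this, Basis.sum_repr]
    rfl
  set G : Fin n → (B ⟶ D) := fun j => ∑ i ∈ s, c i j • g i with hG_def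
  have hFG : ∑ j : Fin n, Ffam j ⊗ₘ G j = 0 := by
    calc ∑ j : Fin n, Ffam j ⊗ₘ G j
        = ∑ j : Fin n, ∑ i ∈ s, Ffam j ⊗ₘ (c i j • g i) := by
          refine Finset.sum_congr rfl fun j _ => ?_
          rw [hG_def]
          exact tensor_sum _ _ _
      _ = ∑ i ∈ s, ∑ j : Fin n, (c i j • Ffam j) ⊗ₘ g i := by
          rw [Finset.sum_comm]
          refine Finset.sum_congr rfl fun i _ => Finset.sum_congr rfl fun j _ => ?_
          rw [aux_smul_tensor]
          rw [MonoidalCategory.tensorHom_def, MonoidalLinear.whiskerLeft_smul, Linear.comp_smul,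
            ← MonoidalCategory.tensorHom_def]
      _ = ∑ i ∈ s, (∑ j : Fin n, c i j • Ffam j) ⊗ₘ g i := by
          refine Finset.sum_congr rfl fun i _ => ?_
          exact (sum_tensor _ _ _).symm
      _ = ∑ i ∈ s, f i ⊗ₘ g i := by
          refine Finset.sum_congr rfl fun i hi => ?_
          rw [← hrepr i hi]
      _ = 0 := hsum
  have hG0 : ∀ j, G j = 0 := aux_indep_pair_gen k Ffam hFind G hFG
  calc ∑ i ∈ s, φ (f i) • g i
      = ∑ i ∈ s, ∑ j : Fin n, (c i j * φ (Ffam j)) • g i := by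
        refine Finset.sum_congr rfl fun i hi => ?_
        rw [hrepr i hi, map_sum, Finset.sum_smul]
        refine Finset.sum_congr rfl fun j _ => ?_
        rw [map_smul, smul_eq_mul]
    _ = ∑ j : Fin n, φ (Ffam j) • G j := by
        rw [Finset.sum_comm]
        refine Finset.sum_congr rfl fun j _ => ?_
        rw [hG_def, Finset.smul_sum]
        refine Finset.sum_congr rfl fun i _ => ?_
        rw [mul_comm, mul_smul]
    _ = 0 := by
        refine Finset.sum_eq_zero fun j _ => ?_
        rw [hG0 j, smul_zero]

end Aux

/-- Let `I` be a small monoidal category, `C` a tensor category over an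
algebraically closed field `k`, and `F, G : I ⥤ C` strong monoidal functors. Then the set
of monoidal natural transformations `F ⟶ G` is a linearly independent subset of the
`k`-vector space of all natural transformations `F ⟶ G`. -/
theorem monoidalNatTrans_linearIndependent
    (k : Type*) [Field k] [IsAlgClosed k]
    {C : Type*} [Category C] [Abelian C] [Linear k C]
    [MonoidalCategory C] [MonoidalPreadditive C] [MonoidalLinear k C]
    [RigidCategory C] [Simple (𝟙_ C)]
    [∀ X : C, IsNoetherianObject X] [∀ X : C, IsArtinianObject X]
    [∀ X Y : C, FiniteDimensional k (X ⟶ Y)]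
    {I : Type*} [SmallCategory I] [MonoidalCategory I]
    (F G : I ⥤ C) [F.Monoidal] [G.Monoidal] :
    LinearIndependent k (fun g : {g : F ⟶ G // NatTrans.IsMonoidal g} => (g : F ⟶ G)) := by
  classical
  rw [linearIndependent_iff']
  intro s₀
  induction s₀ using Finset.strongInduction with
  | _ s ih =>
    intro a hrel i hi
    -- notation
    have happ : ∀ (Z : I), ∑ i' ∈ s, a i' • ((i' : F ⟶ G)).app Z = 0 := by
      intro Z
      have := congrArg (fun (t : F ⟶ G) => t.app Z) hrel
      simpa [NatTrans.app_sum, NatTrans.app_smul] using this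
    -- Step 1: derived relations
    have hder : ∀ (X : I) (φ : (F.obj X ⟶ G.obj X) →ₗ[k] k) (Y : I),
        ∑ i' ∈ s, (a i' * (φ (((i' : F ⟶ G)).app X) - φ (((i : F ⟶ G)).app X)))
          • ((i' : F ⟶ G)).app Y = 0 := by
      intro X φ Y
      have E2 : ∑ i' ∈ s, (a i' * φ (((i : F ⟶ G)).app X)) • ((i' : F ⟶ G)).app Y = 0 := by
        calc ∑ i' ∈ s, (a i' * φ (((i : F ⟶ G)).app X)) • ((i' : F ⟶ G)).app Y
            = φ (((i : F ⟶ G)).app X) • ∑ i' ∈ s, a i' • ((i' : F ⟶ G)).app Y := by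
              rw [Finset.smul_sum]
              refine Finset.sum_congr rfl fun i' _ => ?_
              rw [mul_comm, mul_smul]
          _ = 0 := by rw [happ Y, smul_zero]
      have E1 : ∑ i' ∈ s, (a i' * φ (((i' : F ⟶ G)).app X)) • ((i' : F ⟶ G)).app Y = 0 := by
        -- use the relation at X ⊗ₘ Y and monoidality
        have hXY := happ (X ⊗ Y)
        have htensor : ∀ i' : {g : F ⟶ G // NatTrans.IsMonoidal g},
            ((i' : F ⟶ G)).app (X ⊗ Y)
              = inv (Functor.LaxMonoidal.μ F X Y)
                ≫ (((i' : F ⟶ G)).app X ⊗ₘ ((i' : F ⟶ G)).app Y)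
                ≫ Functor.LaxMonoidal.μ G X Y := by
          intro i'
          have h := i'.2.tensor X Y
          rw [← h]
          simp
        have hmid : ∑ i' ∈ s, ((a i' • ((i' : F ⟶ G)).app X) ⊗ₘ ((i' : F ⟶ G)).app Y) = 0 := by
          have h0 : inv (Functor.LaxMonoidal.μ F X Y)
              ≫ (∑ i' ∈ s, (a i' • ((i' : F ⟶ G)).app X) ⊗ₘ ((i' : F ⟶ G)).app Y)
              ≫ Functor.LaxMonoidal.μ G X Y = 0 := by
            rw [← hXY]
            rw [Preadditive.sum_comp, Preadditive.comp_sum]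
            refine Finset.sum_congr rfl fun i' _ => ?_
            rw [htensor i', aux_smul_tensor, Linear.smul_comp, Linear.comp_smul]
          have := congrArg (fun t => (Functor.LaxMonoidal.μ F X Y) ≫ t
            ≫ inv (Functor.LaxMonoidal.μ G X Y)) h0
          simpa using this
        have := aux_extract k s
          (fun i' => a i' • ((i' : F ⟶ G)).app X)
          (fun i' => ((i' : F ⟶ G)).app Y) hmid φ
        calc ∑ i' ∈ s, (a i' * φ (((i' : F ⟶ G)).app X)) • ((i' : F ⟶ G)).app Y
            = ∑ i' ∈ s, φ (a i' • ((i' : F ⟶ G)).app X) • ((i' : F ⟶ G)).app Y := by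
              refine Finset.sum_congr rfl fun i' _ => ?_
              rw [map_smul, smul_eq_mul]
          _ = 0 := this
      calc ∑ i' ∈ s, (a i' * (φ (((i' : F ⟶ G)).app X) - φ (((i : F ⟶ G)).app X)))
            • ((i' : F ⟶ G)).app Y
          = ∑ i' ∈ s, ((a i' * φ (((i' : F ⟶ G)).app X)) • ((i' : F ⟶ G)).app Y
              - (a i' * φ (((i : F ⟶ G)).app X)) • ((i' : F ⟶ G)).app Y) := by
            refine Finset.sum_congr rfl fun i' _ => ?_
            rw [mul_sub, sub_smul]
        _ = 0 := by rw [Finset.sum_sub_distrib, E1, E2, sub_zero]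
    -- Step 2: all other coefficients vanish
    have hother : ∀ i' ∈ s, i' ≠ i → a i' = 0 := by
      intro i' hi' hne
      by_contra ha
      -- then the components of i' and i agree everywhere
      have heq : (i' : F ⟶ G) = (i : F ⟶ G) := by
        apply NatTrans.ext
        funext X
        have hsep : ∀ φ : Module.Dual k (F.obj X ⟶ G.obj X),
            φ (((i' : F ⟶ G)).app X - ((i : F ⟶ G)).app X) = 0 := by
          intro φ
          -- build the derived relation with this φ and X
          set b : {g : F ⟶ G // NatTrans.IsMonoidal g} → k :=
            fun i'' => a i'' * (φ (((i'' : F ⟶ G)).app X) - φ (((i : F ⟶ G)).app X))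
            with hb_def
          have hbrel : ∑ i'' ∈ s, b i'' • (i'' : F ⟶ G) = 0 := by
            apply NatTrans.ext
            funext Y
            have := hder X φ Y
            simpa [NatTrans.app_sum, NatTrans.app_smul] using this
          have hbi : b i = 0 := by rw [hb_def]; simp
          have hberase : ∑ i'' ∈ s.erase i, b i'' • (i'' : F ⟶ G) = 0 := by
            rw [Finset.sum_erase s (by rw [hbi, zero_smul])]
            exact hbrel
          have := ih (s.erase i) (Finset.erase_ssubset hi) b hberase i'
            (Finset.mem_erase.mpr ⟨hne, hi'⟩)
          rw [hb_def] at this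
          have hfactor : φ (((i' : F ⟶ G)).app X) - φ (((i : F ⟶ G)).app X) = 0 := by
            rcases mul_eq_zero.mp this with h | h
            · exact absurd h ha
            · exact h
          rw [map_sub]
          exact hfactor
        have := (Module.forall_dual_apply_eq_zero_iff k
          (((i' : F ⟶ G)).app X - ((i : F ⟶ G)).app X)).mp hsep
        exact sub_eq_zero.mp this
      exact hne (Subtype.ext heq)
    -- Step 3: the remaining term
    have hsingle : a i • (i : F ⟶ G) = 0 := by
      rw [← hrel]
      symm
      apply Finset.sum_eq_single_of_mem i hi
      intro i' hi' hne
      rw [hother i' hi' hne, zero_smul]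
    by_contra ha
    -- then (i : F ⟶ G) = 0, contradicting invertibility of the unit component
    have hzero : (i : F ⟶ G) = 0 := by
      rcases smul_eq_zero.mp hsingle with h | h
      · exact absurd h ha
      · exact h
    have hunit := i.2.unit
    rw [hzero] at hunit
    simp only [NatTrans.app_zero, comp_zero] at hunit
    haveI : IsIso (Functor.LaxMonoidal.ε G) := inferInstance
    apply id_nonzero (𝟙_ C)
    have hcomp : 𝟙 (𝟙_ C) ≫ Functor.LaxMonoidal.ε G
        = (0 : 𝟙_ C ⟶ 𝟙_ C) ≫ Functor.LaxMonoidal.ε G := by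
      rw [← hunit]
      simp
    exact (cancel_mono (Functor.LaxMonoidal.ε G)).mp hcomp
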